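/- In the presented group G = ⟨a, b, c, d ∣ b = cac⁻¹, c = a⁻¹ba, d = aca⁻¹, a = c⁻¹dc⟩, the relations imply G is generated by a and b alone, and G is isomorphic to ⟨a, b ∣ a⁻¹bab⁻¹ab⁻¹⟩. -/

import Mathlib

open FreeGroup in
/-- The Wirtinger relators of `⟨a, b, c, d ∣ b = cac⁻¹, c = a⁻¹ba, d = aca⁻¹,
a = c⁻¹dc⟩`, with `a, b, c, d` the generators `0, 1, 2, 3` of the free group on
four letters. -/
def wirtRels15 : Set (FreeGroup (Fin 4)) :=
  { of 1 * (of 2 * of 0 * (of 2)⁻¹)⁻¹,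
    of 2 * ((of 0)⁻¹ * of 1 * of 0)⁻¹,
    of 3 * (of 0 * of 2 * (of 0)⁻¹)⁻¹,
    of 0 * ((of 2)⁻¹ * of 3 * of 2)⁻¹ }

/-- The two-generator relator `a⁻¹ b a b⁻¹ a b⁻¹`. -/
def rel0 : FreeGroup (Fin 2) :=
  (FreeGroup.of 0)⁻¹ * FreeGroup.of 1 * FreeGroup.of 0 * (FreeGroup.of 1)⁻¹ *
    FreeGroup.of 0 * (FreeGroup.of 1)⁻¹

lemma mk_rel_eq_one {α : Type*} {rels : Set (FreeGroup α)} {r : FreeGroup α}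
    (h : r ∈ rels) : PresentedGroup.mk rels r = 1 :=
  (QuotientGroup.eq_one_iff _).mpr (Subgroup.subset_normalClosure h)

abbrev Gp15 : Type := PresentedGroup wirtRels15
abbrev Hp15 : Type := PresentedGroup ({rel0} : Set (FreeGroup (Fin 2)))

noncomputable def fmap15 : Fin 4 → Hp15 :=
  ![PresentedGroup.of 0, PresentedGroup.of 1,
    (PresentedGroup.of 0)⁻¹ * PresentedGroup.of 1 * PresentedGroup.of 0,
    PresentedGroup.of 1]

noncomputable def gmap15 : Fin 2 → Gp15 :=
  ![PresentedGroup.of 0, PresentedGroup.of 1]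

lemma hrelH15 : (PresentedGroup.of 0 : Hp15)⁻¹ * PresentedGroup.of 1 * PresentedGroup.of 0 *
    (PresentedGroup.of 1)⁻¹ * PresentedGroup.of 0 * (PresentedGroup.of 1)⁻¹ = 1 := by
  have h := mk_rel_eq_one (rels := ({rel0} : Set (FreeGroup (Fin 2)))) rfl
  rw [rel0] at h
  simp only [map_mul, map_inv] at h
  exact h

lemma hf15 : ∀ r ∈ wirtRels15, FreeGroup.lift fmap15 r = 1 := by
  have hrel := hrelH15
  set A : Hp15 := PresentedGroup.of 0 with hA
  set B : Hp15 := PresentedGroup.of 1 with hB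
  intro r hr
  rcases hr with h | h | h | h
  · subst h
    have e : FreeGroup.lift fmap15
        (FreeGroup.of 1 * (FreeGroup.of 2 * FreeGroup.of 0 * (FreeGroup.of 2)⁻¹)⁻¹) =
        B * ((A⁻¹ * B * A) * A * (A⁻¹ * B * A)⁻¹)⁻¹ := by
      simp [fmap15, hA, hB]
    rw [e, show B * ((A⁻¹ * B * A) * A * (A⁻¹ * B * A)⁻¹)⁻¹ =
      (A⁻¹ * B * A * B⁻¹ * A * B⁻¹)⁻¹ from by group, hrel, inv_one]
  · subst h
    have e : FreeGroup.lift fmap15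
        (FreeGroup.of 2 * ((FreeGroup.of 0)⁻¹ * FreeGroup.of 1 * FreeGroup.of 0)⁻¹) =
        (A⁻¹ * B * A) * (A⁻¹ * B * A)⁻¹ := by
      simp [fmap15]
    rw [e, mul_inv_cancel]
  · subst h
    have e : FreeGroup.lift fmap15
        (FreeGroup.of 3 * (FreeGroup.of 0 * FreeGroup.of 2 * (FreeGroup.of 0)⁻¹)⁻¹) =
        B * (A * (A⁻¹ * B * A) * A⁻¹)⁻¹ := by
      simp [fmap15, hA, hB]
    rw [e]; group
  · subst h
    have e : FreeGroup.lift fmap15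
        (FreeGroup.of 0 * ((FreeGroup.of 2)⁻¹ * FreeGroup.of 3 * FreeGroup.of 2)⁻¹) =
        A * ((A⁻¹ * B * A)⁻¹ * B * (A⁻¹ * B * A))⁻¹ := by
      simp [fmap15, hA, hB]
    rw [e, show A * ((A⁻¹ * B * A)⁻¹ * B * (A⁻¹ * B * A))⁻¹ =
      (A⁻¹ * B * A)⁻¹ * (A⁻¹ * B * A * B⁻¹ * A * B⁻¹) * (A⁻¹ * B * A) from by group,
      hrel]
    group

lemma hC15 : (PresentedGroup.of 2 : Gp15) =
    (PresentedGroup.of 0)⁻¹ * PresentedGroup.of 1 * PresentedGroup.of 0 := by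
  have h := mk_rel_eq_one (rels := wirtRels15) (by right; left; rfl)
  simp only [map_mul, map_inv] at h
  exact mul_inv_eq_one.mp h

lemma hB15 : (PresentedGroup.of 1 : Gp15) =
    PresentedGroup.of 2 * PresentedGroup.of 0 * (PresentedGroup.of 2)⁻¹ := by
  have h := mk_rel_eq_one (rels := wirtRels15) (by left; rfl)
  simp only [map_mul, map_inv] at h
  exact mul_inv_eq_one.mp h

lemma hD15 : (PresentedGroup.of 3 : Gp15) =
    PresentedGroup.of 0 * PresentedGroup.of 2 * (PresentedGroup.of 0)⁻¹ := by
  have h := mk_rel_eq_one (rels := wirtRels15) (by right; right; left; rfl)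
  simp only [map_mul, map_inv] at h
  exact mul_inv_eq_one.mp h

lemma hg15 : ∀ r ∈ ({rel0} : Set (FreeGroup (Fin 2))), FreeGroup.lift gmap15 r = 1 := by
  intro r hr
  rw [Set.mem_singleton_iff] at hr
  subst hr
  set A : Gp15 := PresentedGroup.of 0 with hA
  set B : Gp15 := PresentedGroup.of 1 with hB'
  have e : FreeGroup.lift gmap15 rel0 = A⁻¹ * B * A * B⁻¹ * A * B⁻¹ := by
    simp [rel0, gmap15, hA, hB']
  rw [e]
  have h1 : B = (A⁻¹ * B * A) * A * (A⁻¹ * B * A)⁻¹ := by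
    rw [← hC15]; exact hB15
  rw [show A⁻¹ * B * A * B⁻¹ * A * B⁻¹ =
    (B * ((A⁻¹ * B * A) * A * (A⁻¹ * B * A)⁻¹)⁻¹)⁻¹ from by group, ← h1]
  simp

noncomputable def phi15 : Gp15 →* Hp15 := PresentedGroup.toGroup hf15
noncomputable def psi15 : Hp15 →* Gp15 := PresentedGroup.toGroup hg15

lemma key15 : ∀ i, phi15 (PresentedGroup.of i) = fmap15 i :=
  fun _ => PresentedGroup.toGroup.of hf15

lemma key15' : ∀ i, psi15 (PresentedGroup.of i) = gmap15 i :=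
  fun _ => PresentedGroup.toGroup.of hg15

lemma psi_phi15 : psi15.comp phi15 = MonoidHom.id Gp15 := by
  apply PresentedGroup.ext
  intro x
  fin_cases x
  · show psi15 (phi15 (PresentedGroup.of 0)) = PresentedGroup.of 0
    rw [key15 0]
    show psi15 (PresentedGroup.of 0) = PresentedGroup.of 0
    rw [key15' 0]; rfl
  · show psi15 (phi15 (PresentedGroup.of 1)) = PresentedGroup.of 1
    rw [key15 1]
    show psi15 (PresentedGroup.of 1) = PresentedGroup.of 1
    rw [key15' 1]; rfl
  · show psi15 (phi15 (PresentedGroup.of 2)) = PresentedGroup.of 2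
    rw [key15 2]
    show psi15 ((PresentedGroup.of 0)⁻¹ * PresentedGroup.of 1 * PresentedGroup.of 0) =
      PresentedGroup.of 2
    rw [map_mul, map_mul, map_inv, key15' 0, key15' 1]
    show (PresentedGroup.of 0 : Gp15)⁻¹ * PresentedGroup.of 1 * PresentedGroup.of 0 =
      PresentedGroup.of 2
    exact hC15.symm
  · show psi15 (phi15 (PresentedGroup.of 3)) = PresentedGroup.of 3
    rw [key15 3]
    show psi15 (PresentedGroup.of 1) = PresentedGroup.of 3
    rw [key15' 1]
    show (PresentedGroup.of 1 : Gp15) = PresentedGroup.of 3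
    rw [hD15, hC15]; group

lemma phi_psi15 : phi15.comp psi15 = MonoidHom.id Hp15 := by
  apply PresentedGroup.ext
  intro x
  fin_cases x
  · show phi15 (psi15 (PresentedGroup.of 0)) = PresentedGroup.of 0
    rw [key15' 0]
    show phi15 (PresentedGroup.of 0) = PresentedGroup.of 0
    rw [key15 0]; rfl
  · show phi15 (psi15 (PresentedGroup.of 1)) = PresentedGroup.of 1
    rw [key15' 1]
    show phi15 (PresentedGroup.of 1) = PresentedGroup.of 1
    rw [key15 1]; rfl

/-- The group `G = ⟨a, b, c, d ∣ b = cac⁻¹, c = a⁻¹ba, d = aca⁻¹, a = c⁻¹dc⟩`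
is generated by `a` and `b` alone, and is isomorphic to
`⟨a, b ∣ a⁻¹bab⁻¹ab⁻¹⟩`. -/
theorem stmt15 :
    Subgroup.closure ({PresentedGroup.of 0, PresentedGroup.of 1} :
        Set (PresentedGroup wirtRels15)) = ⊤ ∧
    Nonempty (PresentedGroup wirtRels15 ≃*
      PresentedGroup ({rel0} : Set (FreeGroup (Fin 2)))) := by
  constructor
  · rw [eq_top_iff]
    intro x _
    refine PresentedGroup.generated_by _ _ (fun j => ?_) x
    have h0 : (PresentedGroup.of 0 : PresentedGroup wirtRels15) ∈
        Subgroup.closure {PresentedGroup.of 0, PresentedGroup.of 1} :=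
      Subgroup.subset_closure (by left; rfl)
    have h1 : (PresentedGroup.of 1 : PresentedGroup wirtRels15) ∈
        Subgroup.closure {PresentedGroup.of 0, PresentedGroup.of 1} :=
      Subgroup.subset_closure (by right; rfl)
    fin_cases j
    · exact h0
    · exact h1
    · show (PresentedGroup.of 2 : PresentedGroup wirtRels15) ∈ _
      rw [hC15]; exact Subgroup.mul_mem _ (Subgroup.mul_mem _ (Subgroup.inv_mem _ h0) h1) h0
    · show (PresentedGroup.of 3 : PresentedGroup wirtRels15) ∈ _
      rw [hD15, hC15]
      exact Subgroup.mul_mem _ (Subgroup.mul_mem _ h0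
        (Subgroup.mul_mem _ (Subgroup.mul_mem _ (Subgroup.inv_mem _ h0) h1) h0))
        (Subgroup.inv_mem _ h0)
  · exact ⟨MonoidHom.toMulEquiv phi15 psi15 psi_phi15 phi_psi15⟩
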